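/- In Q = C[∂, y^{±1}]*Γ one has d_k y − y d_k = 1 + ∑_{j=0}^{n-1}(k_j − k_{j+1}) e_j, where indices are read mod n and k_0 = k_n = 0. -/

import Mathlib

open Finset

/-- ω = e^{2πi/n}, a primitive n-th root of unity. -/
noncomputable def omegaRoot (n : ℕ) : ℂ := Complex.exp (2 * Real.pi * Complex.I / n)

/-- In `Q = ℂ[∂, y^{±1}] * Γ` one has
`d_k y − y d_k = 1 + ∑_{j=0}^{n-1} (k_j − k_{j+1}) e_j`,
indices read mod `n` and `k_0 = k_n = 0`. -/
theorem statement3 {Q : Type*} [Ring Q] [Algebra ℂ Q] (n : ℕ) (hn : 0 < n)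
    (y yinv d γ : Q)
    (hy : y * yinv = 1) (hy' : yinv * y = 1)
    (hWeyl : d * y - y * d = 1)
    (hγ : γ ^ n = 1)
    (hyγ : y * γ = omegaRoot n • (γ * y))
    (hγd : γ * d = omegaRoot n • (d * γ))
    (e : ℕ → Q)
    (he : ∀ i, e i = (n : ℂ)⁻¹ • ∑ j ∈ range n, ((omegaRoot n) ^ i • γ) ^ j)
    (k : ℤ → ℂ) (hk0 : k 0 = 0) (hkper : ∀ j : ℤ, k (j + n) = k j)
    (dk : Q)
    (hdk : dk = d - yinv * ∑ i ∈ Icc 1 (n - 1), k i • e i) :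
    dk * y - y * dk = 1 + ∑ j ∈ range n, (k j - k ((j : ℤ) + 1)) • e j := by
  set ω := omegaRoot n with hω
  have hω0 : ω ≠ 0 := Complex.exp_ne_zero _
  -- γ^j * y = (ω^j)⁻¹ • (y * γ^j)
  have lem1 : ∀ j : ℕ, γ ^ j * y = (ω ^ j)⁻¹ • (y * γ ^ j) := by
    intro j
    induction j with
    | zero => simp
    | succ j ih =>
      have hγy : γ * y = ω⁻¹ • (y * γ) := by
        rw [hyγ, smul_smul, inv_mul_cancel₀ hω0, one_smul]
      rw [pow_succ, mul_assoc, hγy, mul_smul_comm, ← mul_assoc, ih,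
        smul_mul_assoc, smul_smul, ← mul_assoc]
      congr 1
      rw [pow_succ, mul_inv, mul_comm]
  -- e (i+1) * y = y * e i
  have lem2 : ∀ i : ℕ, e (i + 1) * y = y * e i := by
    intro i
    rw [he (i + 1), he i, smul_mul_assoc, mul_smul_comm, Finset.sum_mul, Finset.mul_sum]
    congr 1
    refine Finset.sum_congr rfl fun j _ => ?_
    rw [smul_pow, smul_pow, smul_mul_assoc, lem1 j, mul_smul_comm, smul_smul]
    congr 1
    rw [← pow_mul, ← pow_mul]
    field_simp
    rw [← pow_add]
    congr 1
    ring
  obtain ⟨m, rfl⟩ : ∃ m, n = m + 1 := ⟨n - 1, by omega⟩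
  set S : Q := ∑ i ∈ Icc 1 (m + 1 - 1), k i • e i with hS
  set T : Q := ∑ i ∈ Icc 1 (m + 1 - 1), k i • e (i - 1) with hT
  have hSy : S * y = y * T := by
    rw [hS, hT, Finset.sum_mul, Finset.mul_sum]
    refine Finset.sum_congr rfl fun i hi => ?_
    have h1 : 1 ≤ i := (Finset.mem_Icc.mp hi).1
    rw [smul_mul_assoc, mul_smul_comm]
    congr 1
    obtain ⟨i, rfl⟩ : ∃ j, i = j + 1 := ⟨i - 1, by omega⟩
    simpa using lem2 i
  subst hdk
  have expand : (d - yinv * S) * y - y * (d - yinv * S)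
      = (d * y - y * d) - yinv * (S * y) + (y * yinv) * S := by noncomm_ring
  rw [expand, hWeyl, hSy, ← mul_assoc, hy', one_mul, hy, one_mul]
  -- now: 1 - T + S = 1 + ∑ (k j - k (j+1)) • e j
  have hsplit : ∑ j ∈ range (m + 1), (k j - k ((j : ℤ) + 1)) • e j
      = (∑ j ∈ range (m + 1), k j • e j) - ∑ j ∈ range (m + 1), k ((j : ℤ) + 1) • e j := by
    rw [← Finset.sum_sub_distrib]
    exact Finset.sum_congr rfl fun j _ => by rw [sub_smul]
  have hSsum : ∑ j ∈ range (m + 1), k j • e j = S := by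
    rw [Finset.sum_range_succ', Nat.cast_zero, hk0, zero_smul, add_zero,
      hS]
    have : Icc 1 (m + 1 - 1) = Ico 1 (m + 1) := by
      rw [Finset.Ico_add_one_right_eq_Icc]; simp
    rw [this, Finset.sum_Ico_eq_sum_range]
    refine Finset.sum_congr rfl fun j _ => ?_
    simp [add_comm]
  have hTsum : ∑ j ∈ range (m + 1), k ((j : ℤ) + 1) • e j = T := by
    rw [Finset.sum_range_succ]
    have hk1 : k ((m : ℤ) + 1) = 0 := by
      have := hkper 0
      rw [zero_add, hk0] at this
      rw [show ((m : ℤ) + 1) = ((m + 1 : ℕ) : ℤ) by push_cast; ring, this]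
    rw [hk1, zero_smul, add_zero, hT]
    have : Icc 1 (m + 1 - 1) = Ico 1 (m + 1) := by rw [Finset.Ico_add_one_right_eq_Icc]; simp
    rw [this, Finset.sum_Ico_eq_sum_range]
    refine Finset.sum_congr rfl fun j _ => ?_
    have h1 : 1 + j - 1 = j := by omega
    rw [h1]
    congr 2
    push_cast
    ring
  rw [hsplit, hSsum, hTsum]
  abel
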